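/- Let X : Δᵒᵖ → Set be a continuous simplicial set. Then the relation ≤_X on X₀ is antisymmetric: if x ≤_X y and y ≤_X x then x = y. -/

import Mathlib

open CategoryTheory Limits Opposite

/-- A simplicial set `X : Δᵒᵖ ⥤ Type` is *continuous* if it preserves all limits that
exist in `Δᵒᵖ`; equivalently, it takes colimits in `Δ` to limits in `Set`. -/
def IsContinuousSSet (X : SimplexCategoryᵒᵖ ⥤ Type) : Prop :=
  ∀ ⦃J : Type⦄ [SmallCategory J] (D : J ⥤ SimplexCategoryᵒᵖ) (c : Cone D),
    Nonempty (IsLimit c) → Nonempty (IsLimit (X.mapCone c))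

/-- The relation `≤_X` on the `0`-simplices of a simplicial set `X`:
`x ≤_X y` iff there is a `1`-simplex `f` with `d₁ f = x` and `d₀ f = y`. -/
def sSetLe (X : SimplexCategoryᵒᵖ ⥤ Type) (x y : X.obj (op (SimplexCategory.mk 0))) : Prop :=
  ∃ f : X.obj (op (SimplexCategory.mk 1)),
    X.map (SimplexCategory.δ 1).op f = x ∧ X.map (SimplexCategory.δ 0).op f = y

namespace SSetAnti

inductive J : Type where
  | s | t | e1 | e2

inductive JHom : J → J → Type where
  | id (x : J) : JHom x x
  | se1 : JHom .s .e1
  | se2 : JHom .s .e2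
  | te1 : JHom .t .e1
  | te2 : JHom .t .e2

def JHom.comp : {x y z : J} → JHom x y → JHom y z → JHom x z
  | _, _, _, .id _, g => g
  | _, _, _, .se1, .id _ => .se1
  | _, _, _, .se2, .id _ => .se2
  | _, _, _, .te1, .id _ => .te1
  | _, _, _, .te2, .id _ => .te2

instance : SmallCategory J where
  Hom := JHom
  id := JHom.id
  comp := JHom.comp
  id_comp := by intro x y f; rfl
  comp_id := by intro x y f; cases f <;> rfl
  assoc := by intro w x y z f g h; cases f <;> cases g <;> cases h <;> rfl

def D : J ⥤ SimplexCategory where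
  obj x := match x with
    | .s | .t => SimplexCategory.mk 0
    | .e1 | .e2 => SimplexCategory.mk 1
  map {x y} f := match f with
    | .id _ => 𝟙 _
    | .se1 => SimplexCategory.δ 0
    | .se2 => SimplexCategory.δ 1
    | .te1 => SimplexCategory.δ 1
    | .te2 => SimplexCategory.δ 0
  map_id := fun x => rfl
  map_comp := by
    intro x y z f g
    change JHom x y at f; change JHom y z at g
    cases f <;> cases g <;> simp [JHom.comp] <;> rfl

def C : Cocone D where
  pt := SimplexCategory.mk 0
  ι := {
    app := fun x => match x with
      | .s | .t => 𝟙 _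
      | .e1 | .e2 => SimplexCategory.σ 0
    naturality := by
      intro x y f
      change JHom x y at f
      cases f <;> apply SimplexCategory.eq_const_to_zero _ |>.trans (SimplexCategory.eq_const_to_zero _).symm
  }

def hC : IsColimit C where
  desc A := A.ι.app .s
  fac A j := by
    -- naturality equations
    have hse1 : SimplexCategory.δ 0 ≫ A.ι.app .e1 = A.ι.app .s := by
      simpa [D] using A.ι.naturality JHom.se1
    have hse2 : SimplexCategory.δ 1 ≫ A.ι.app .e2 = A.ι.app .s := by
      simpa [D] using A.ι.naturality JHom.se2
    have hte1 : SimplexCategory.δ 1 ≫ A.ι.app .e1 = A.ι.app .t := by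
      simpa [D] using A.ι.naturality JHom.te1
    have hte2 : SimplexCategory.δ 0 ≫ A.ι.app .e2 = A.ι.app .t := by
      simpa [D] using A.ι.naturality JHom.te2
    -- values
    have v1 : (A.ι.app J.e1).toOrderHom 1 = (A.ι.app J.s).toOrderHom 0 := by
      rw [← hse1]; rfl
    have v0 : (A.ι.app J.e1).toOrderHom 0 = (A.ι.app J.t).toOrderHom 0 := by
      rw [← hte1]; rfl
    have w0 : (A.ι.app J.e2).toOrderHom 0 = (A.ι.app J.s).toOrderHom 0 := by
      rw [← hse2]; rfl
    have w1 : (A.ι.app J.e2).toOrderHom 1 = (A.ι.app J.t).toOrderHom 0 := by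
      rw [← hte2]; rfl
    have mono1 : (A.ι.app J.e1).toOrderHom 0 ≤ (A.ι.app J.e1).toOrderHom 1 :=
      (A.ι.app J.e1).toOrderHom.monotone (by decide)
    have mono2 : (A.ι.app J.e2).toOrderHom 0 ≤ (A.ι.app J.e2).toOrderHom 1 :=
      (A.ι.app J.e2).toOrderHom.monotone (by decide)
    have key : (A.ι.app J.t).toOrderHom 0 = (A.ι.app J.s).toOrderHom 0 := by
      apply le_antisymm
      · rw [← v0, ← v1]; exact mono1
      · rw [← w0, ← w1]; exact mono2
    have fin1 : ∀ a : Fin ((SimplexCategory.mk 0).len + 1), a = 0 :=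
      fun a => Subsingleton.elim (α := Fin 1) a 0
    cases j with
    | s => simp [C]; exact Category.id_comp _
    | t =>
      show 𝟙 _ ≫ A.ι.app .s = A.ι.app .t
      rw [Category.id_comp]
      exact (SimplexCategory.Hom.ext_zero_left _ _ key.symm)
    | e1 =>
      show SimplexCategory.σ 0 ≫ A.ι.app .s = A.ι.app .e1
      refine SimplexCategory.Hom.ext_one_left _ _ ?_ ?_
      · show (A.ι.app J.s).toOrderHom ((SimplexCategory.σ 0).toOrderHom 0) = _
        rw [fin1 ((SimplexCategory.σ 0).toOrderHom 0)]; exact (v0.trans key).symm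
      · show (A.ι.app J.s).toOrderHom ((SimplexCategory.σ 0).toOrderHom 1) = _
        rw [fin1 ((SimplexCategory.σ 0).toOrderHom 1)]; exact v1.symm
    | e2 =>
      show SimplexCategory.σ 0 ≫ A.ι.app .s = A.ι.app .e2
      refine SimplexCategory.Hom.ext_one_left _ _ ?_ ?_
      · show (A.ι.app J.s).toOrderHom ((SimplexCategory.σ 0).toOrderHom 0) = _
        rw [fin1 ((SimplexCategory.σ 0).toOrderHom 0)]; exact w0.symm
      · show (A.ι.app J.s).toOrderHom ((SimplexCategory.σ 0).toOrderHom 1) = _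
        rw [fin1 ((SimplexCategory.σ 0).toOrderHom 1)]; exact (w1.trans key).symm
  uniq A m h := (Category.id_comp m).symm.trans (h .s)

end SSetAnti

def SSetAntiEl (X : SimplexCategoryᵒᵖ ⥤ Type)
    (x y : X.obj (op (SimplexCategory.mk 0)))
    (f g : X.obj (op (SimplexCategory.mk 1))) :
    ∀ j : SSetAnti.J, X.obj (op (SSetAnti.D.obj j))
  | .s => y
  | .t => x
  | .e1 => f
  | .e2 => g

/-- Let `X : Δᵒᵖ → Set` be a continuous simplicial set. Then the
relation `≤_X` on `X₀` is antisymmetric: if `x ≤_X y` and `y ≤_X x` then `x = y`. -/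
theorem sSetLe_antisymm (X : SimplexCategoryᵒᵖ ⥤ Type) (hX : IsContinuousSSet X)
    (x y : X.obj (op (SimplexCategory.mk 0))) (hxy : sSetLe X x y) (hyx : sSetLe X y x) :
    x = y := by
  obtain ⟨f, hf1, hf0⟩ := hxy
  obtain ⟨g, hg1, hg0⟩ := hyx
  obtain ⟨hlim⟩ := hX SSetAnti.D.op SSetAnti.C.op ⟨SSetAnti.hC.op⟩
  have hel : ∀ {a b : SSetAnti.J} (h : SSetAnti.JHom a b),
      X.map (SSetAnti.D.map h).op (SSetAntiEl X x y f g b) = SSetAntiEl X x y f g a := by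
    intro a b h
    cases h with
    | id a =>
      show X.map (𝟙 _).op (SSetAntiEl X x y f g a) = SSetAntiEl X x y f g a
      rw [CategoryTheory.op_id, X.map_id]
      rfl
    | se1 => exact hf0
    | se2 => exact hg1
    | te1 => exact hf1
    | te2 => exact hg0
  let S : Cone (SSetAnti.D.op ⋙ X) := {
    pt := PUnit
    π := {
      app := fun j => TypeCat.ofHom fun _ => SSetAntiEl X x y f g j.unop
      naturality := by
        rintro ⟨a⟩ ⟨b⟩ u
        ext p
        exact (hel u.unop).symm
    }
  }
  have ft : X.map ((𝟙 (SimplexCategory.mk 0)).op) (hlim.lift S PUnit.unit) = x :=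
    ConcreteCategory.congr_hom (hlim.fac S (op SSetAnti.J.t)) PUnit.unit
  have fs : X.map ((𝟙 (SimplexCategory.mk 0)).op) (hlim.lift S PUnit.unit) = y :=
    ConcreteCategory.congr_hom (hlim.fac S (op SSetAnti.J.s)) PUnit.unit
  exact ft.symm.trans fs
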